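/- arXiv:1508.07185 — 3 statements merged into one kernel-verified Lean document; each statement's English description precedes it below -/
import Mathlib

section
/- Let γ_1, γ_2 ∈ ℂ and ξ_1, ξ_2 ∈ ℂ∖{1}. Then for all k, l ∈ ℕ₀: ℬ(k, l; ξ_1, ξ_2; γ_1, γ_2) = Σ_{j=0}^{l} C(l,j)·ℬ_{k+j}(ξ_1)·ℬ_{l−j}(ξ_2)·γ_1^{k+j}·γ_2^{l−j}, where C(l,j) denotes the binomial coefficient. -/
/-- The twisted Bernoulli numbers `ℬ_n(ξ)`, defined by
`1/(1 - ξ·exp t) = Σ_{n≥0} ℬ_n(ξ) tⁿ/n!` in `ℂ[[t]]`. -/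
noncomputable def twistedBernoulli (ξ : ℂ) (n : ℕ) : ℂ :=
  (Nat.factorial n : ℂ) *
    PowerSeries.coeff (R := ℂ) n (1 - PowerSeries.C (R := ℂ) ξ * PowerSeries.exp ℂ)⁻¹

/-- The power series `exp(γ (t_j + ⋯ + t_r)) = Σ_{m≥0} γ^m (t_j+⋯+t_r)^m / m!`
in `ℂ[[t_1,…,t_r]]`, defined coefficientwise (the `m`-th summand is homogeneous of
degree `m`, so only `m = |d|` contributes to the coefficient at a monomial `d`). -/
noncomputable def expShift (r : ℕ) (j : Fin r) (γ : ℂ) : MvPowerSeries (Fin r) ℂ :=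
  fun d =>
    (γ ^ (d.sum fun _ e => e) / (Nat.factorial (d.sum fun _ e => e) : ℂ)) *
      MvPowerSeries.coeff (R := ℂ) d
        ((∑ k ∈ Finset.univ.filter fun k => j ≤ k, MvPowerSeries.X k) ^ (d.sum fun _ e => e))

/-- The twisted multiple Bernoulli numbers `ℬ(n_1,…,n_r; ξ_1,…,ξ_r; γ_1,…,γ_r)`,
defined by `∏_{j=1}^r (1 − ξ_j·exp(γ_j(t_j+⋯+t_r)))⁻¹
  = Σ_n ℬ(n;ξ;γ) t_1^{n_1}⋯t_r^{n_r}/(n_1!⋯n_r!)` in `ℂ[[t_1,…,t_r]]`. -/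
noncomputable def multipleTwistedBernoulli (r : ℕ) (ξ γ : Fin r → ℂ) (n : Fin r → ℕ) : ℂ :=
  (∏ j, (Nat.factorial (n j) : ℂ)) *
    MvPowerSeries.coeff (R := ℂ) (Finsupp.equivFunOnFinite.symm n)
      (∏ j, (1 - MvPowerSeries.C (σ := Fin r) (R := ℂ) (ξ j) * expShift r j (γ j))⁻¹)

namespace TwistedAux

open Finset

lemma dsum_eq_degree (d : Fin 2 →₀ ℕ) : (d.sum fun _ e => e) = d.degree := rfl

lemma degree_eq (d : Fin 2 →₀ ℕ) : d.degree = d 0 + d 1 := by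
  rw [← dsum_eq_degree, Finsupp.sum_fintype _ _ (fun _ => rfl), Fin.sum_univ_two]

noncomputable def Q (S : Finset (Fin 2)) : MvPolynomial (Fin 2) ℂ := ∑ i ∈ S, MvPolynomial.X i

lemma Q_hom (S : Finset (Fin 2)) : (Q S).IsHomogeneous 1 :=
  MvPolynomial.IsHomogeneous.sum _ _ _ fun _ _ => MvPolynomial.isHomogeneous_X _ _

lemma coeff_Q_pow_eq_zero {S : Finset (Fin 2)} {n : ℕ} {d : Fin 2 →₀ ℕ} (h : d.degree ≠ n) :
    MvPolynomial.coeff d (Q S ^ n) = 0 := by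
  have h2 := (Q_hom S).pow n
  rw [one_mul] at h2
  exact h2.coeff_eq_zero h

/-- The substitution `t ↦ γ·(∑_{i ∈ S} t_i)` of a one-variable power series,
defined coefficientwise. -/
noncomputable def subst2 (S : Finset (Fin 2)) (γ : ℂ) (f : PowerSeries ℂ) :
    MvPowerSeries (Fin 2) ℂ :=
  fun d => PowerSeries.coeff (R := ℂ) d.degree f * γ ^ d.degree * MvPolynomial.coeff d (Q S ^ d.degree)

lemma coeff_subst2 (S : Finset (Fin 2)) (γ : ℂ) (f : PowerSeries ℂ) (d : Fin 2 →₀ ℕ) :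
    MvPowerSeries.coeff (R := ℂ) d (subst2 S γ f) =
      PowerSeries.coeff (R := ℂ) d.degree f * γ ^ d.degree * MvPolynomial.coeff d (Q S ^ d.degree) := rfl

lemma subst2_one (S : Finset (Fin 2)) (γ : ℂ) : subst2 S γ 1 = 1 := by
  ext d
  rw [coeff_subst2]
  by_cases h : d = 0
  · subst h
    simp [map_zero]
  · have hd : d.degree ≠ 0 := by
      rw [Ne, Finsupp.degree_eq_zero_iff]; exact h
    rw [PowerSeries.coeff_one, if_neg hd, MvPowerSeries.coeff_one, if_neg h]
    ring

lemma subst2_mul (S : Finset (Fin 2)) (γ : ℂ) (f g : PowerSeries ℂ) :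
    subst2 S γ (f * g) = subst2 S γ f * subst2 S γ g := by
  ext d
  set n := d.degree with hn
  rw [MvPowerSeries.coeff_mul, coeff_subst2, PowerSeries.coeff_mul]
  have key : ∀ p ∈ Finset.HasAntidiagonal.antidiagonal d,
      MvPowerSeries.coeff (R := ℂ) p.1 (subst2 S γ f) * MvPowerSeries.coeff (R := ℂ) p.2 (subst2 S γ g) =
      ∑ m ∈ range (n + 1), ∑ q ∈ range (n + 1),
        PowerSeries.coeff (R := ℂ) m f * PowerSeries.coeff (R := ℂ) q g * γ ^ n *
          (MvPolynomial.coeff p.1 (Q S ^ m) * MvPolynomial.coeff p.2 (Q S ^ q)) := by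
    intro p hp
    rw [Finset.HasAntidiagonal.mem_antidiagonal] at hp
    have hdeg : p.1.degree + p.2.degree = n := by
      rw [hn, ← hp]
      simp [degree_eq, Finsupp.add_apply]
      ring
    rw [Finset.sum_eq_single p.1.degree]
    · rw [Finset.sum_eq_single p.2.degree]
      · rw [coeff_subst2, coeff_subst2, ← hdeg, pow_add]
        ring
      · intro q _ hq
        rw [coeff_Q_pow_eq_zero (Ne.symm hq)]
        ring
      · intro hq
        exact absurd (mem_range.mpr (by omega)) hq
    · intro m _ hm
      apply Finset.sum_eq_zero
      intro q _
      rw [coeff_Q_pow_eq_zero (Ne.symm hm)]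
      ring
    · intro hm
      exact absurd (mem_range.mpr (by omega)) hm
  rw [Finset.sum_congr rfl key, Finset.sum_comm]
  have swap2 : ∀ m ∈ range (n + 1),
      (∑ p ∈ Finset.HasAntidiagonal.antidiagonal d, ∑ q ∈ range (n + 1),
        PowerSeries.coeff (R := ℂ) m f * PowerSeries.coeff (R := ℂ) q g * γ ^ n *
          (MvPolynomial.coeff p.1 (Q S ^ m) * MvPolynomial.coeff p.2 (Q S ^ q))) =
      ∑ q ∈ range (n + 1),
        PowerSeries.coeff (R := ℂ) m f * PowerSeries.coeff (R := ℂ) q g * γ ^ n *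
          MvPolynomial.coeff d (Q S ^ (m + q)) := by
    intro m _
    rw [Finset.sum_comm]
    refine Finset.sum_congr rfl fun q _ => ?_
    rw [pow_add, MvPolynomial.coeff_mul, Finset.mul_sum]
  rw [Finset.sum_congr rfl swap2]
  have collapse : ∀ m ∈ range (n + 1),
      (∑ q ∈ range (n + 1),
        PowerSeries.coeff (R := ℂ) m f * PowerSeries.coeff (R := ℂ) q g * γ ^ n *
          MvPolynomial.coeff d (Q S ^ (m + q))) =
      PowerSeries.coeff (R := ℂ) m f * PowerSeries.coeff (R := ℂ) (n - m) g * γ ^ n *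
        MvPolynomial.coeff d (Q S ^ n) := by
    intro m hm
    rw [mem_range] at hm
    rw [Finset.sum_eq_single (n - m)]
    · rw [show m + (n - m) = n by omega]
    · intro q _ hq
      rw [coeff_Q_pow_eq_zero (by omega : d.degree ≠ m + q)]
      ring
    · intro hq
      exact absurd (mem_range.mpr (by omega)) hq
  rw [Finset.sum_congr rfl collapse, Finset.Nat.sum_antidiagonal_eq_sum_range_succ_mk,
    Finset.sum_mul, Finset.sum_mul]

lemma coe_Q_pow (S : Finset (Fin 2)) (n : ℕ) :
    ((Q S ^ n : MvPolynomial (Fin 2) ℂ) : MvPowerSeries (Fin 2) ℂ) =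
      (∑ k ∈ S, MvPowerSeries.X k) ^ n := by
  rw [← MvPolynomial.coeToMvPowerSeries.ringHom_apply, map_pow, Q, map_sum]
  simp [MvPolynomial.coeToMvPowerSeries.ringHom_apply]

lemma expShift_eq (j : Fin 2) (γ : ℂ) :
    expShift 2 j γ = subst2 (Finset.univ.filter fun k => j ≤ k) γ (PowerSeries.exp ℂ) := by
  ext d
  rw [coeff_subst2]
  show (γ ^ (d.sum fun _ e => e) / (Nat.factorial (d.sum fun _ e => e) : ℂ)) *
      MvPowerSeries.coeff (R := ℂ) d
        ((∑ k ∈ Finset.univ.filter fun k => j ≤ k, MvPowerSeries.X k) ^ (d.sum fun _ e => e)) = _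
  rw [dsum_eq_degree, ← coe_Q_pow, MvPolynomial.coeff_coe, PowerSeries.coeff_exp]
  have : (algebraMap ℚ ℂ) (1 / (d.degree.factorial : ℚ)) = 1 / (d.degree.factorial : ℂ) := by
    rw [map_div₀, map_one, map_natCast]
  rw [this]
  ring

lemma subst2_one_sub (S : Finset (Fin 2)) (γ : ℂ) (ξ : ℂ) (f : PowerSeries ℂ) :
    subst2 S γ (1 - PowerSeries.C (R := ℂ) ξ * f)
      = 1 - MvPowerSeries.C (σ := Fin 2) (R := ℂ) ξ * subst2 S γ f := by
  ext d
  have hone := coeff_subst2 S γ 1 d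
  rw [subst2_one] at hone
  rw [map_sub, MvPowerSeries.coeff_C_mul, coeff_subst2, coeff_subst2, map_sub,
    PowerSeries.coeff_C_mul, hone]
  ring

lemma constantCoeff_subst2 (S : Finset (Fin 2)) (γ : ℂ) (f : PowerSeries ℂ) :
    MvPowerSeries.constantCoeff (σ := Fin 2) (R := ℂ) (subst2 S γ f) = PowerSeries.constantCoeff (R := ℂ) f := by
  rw [← MvPowerSeries.coeff_zero_eq_constantCoeff_apply, coeff_subst2]
  simp [map_zero]

lemma inv_eq (j : Fin 2) (γ ξ : ℂ) (h : ξ ≠ 1) :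
    (1 - MvPowerSeries.C (σ := Fin 2) (R := ℂ) ξ * expShift 2 j γ)⁻¹
      = subst2 (Finset.univ.filter fun k => j ≤ k) γ
          ((1 - PowerSeries.C (R := ℂ) ξ * PowerSeries.exp ℂ)⁻¹) := by
  have hconst1 :
      PowerSeries.constantCoeff (R := ℂ) (1 - PowerSeries.C (R := ℂ) ξ * PowerSeries.exp ℂ) = 1 - ξ := by
    simp [PowerSeries.constantCoeff_exp]
  have hξ : (1 : ℂ) - ξ ≠ 0 := sub_ne_zero.mpr (Ne.symm h)
  rw [expShift_eq, ← subst2_one_sub]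
  symm
  rw [MvPowerSeries.eq_inv_iff_mul_eq_one (by rw [constantCoeff_subst2, hconst1]; exact hξ)]
  rw [← subst2_mul, PowerSeries.inv_mul_cancel _ (by rw [hconst1]; exact hξ), subst2_one]

lemma coeff_add_pow' (a b : ℕ) :
    MvPolynomial.coeff (Finsupp.single 0 a + Finsupp.single 1 b)
      ((MvPolynomial.X 0 + MvPolynomial.X 1 : MvPolynomial (Fin 2) ℂ) ^ (a + b)) =
      ((a + b).choose a : ℂ) := by
  have hterm : ∀ m : ℕ,
      (MvPolynomial.X 0 : MvPolynomial (Fin 2) ℂ) ^ m * MvPolynomial.X 1 ^ (a + b - m) *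
        ((a + b).choose m : MvPolynomial (Fin 2) ℂ) =
      ((a + b).choose m : ℂ) •
        MvPolynomial.monomial (Finsupp.single 0 m + Finsupp.single 1 (a + b - m)) 1 := by
    intro m
    rw [MvPolynomial.X_pow_eq_monomial, MvPolynomial.X_pow_eq_monomial,
      MvPolynomial.monomial_mul, mul_one]
    rw [MvPolynomial.smul_eq_C_mul, map_natCast MvPolynomial.C, mul_comm]
  rw [Commute.add_pow (Commute.all _ _), MvPolynomial.coeff_sum]
  simp only [hterm, MvPolynomial.coeff_smul, MvPolynomial.coeff_monomial, smul_eq_mul]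
  rw [Finset.sum_eq_single a]
  · rw [Nat.add_sub_cancel_left, if_pos rfl, mul_one]
  · intro m _ hm
    rw [if_neg, mul_zero]
    intro hcon
    have := congrFun (congrArg (fun f : Fin 2 →₀ ℕ => (f : Fin 2 → ℕ)) hcon) 0
    simp [Finsupp.single_apply] at this
    exact hm this
  · intro h
    exact absurd (mem_range.mpr (by omega)) h

lemma nat_id (k l j : ℕ) (hj : j ≤ l) :
    (k.factorial : ℂ) * l.factorial * ((k + j).choose k) =
      (l.choose j) * (k + j).factorial * (l - j).factorial := by
  have h1 : (k + j).choose j * k.factorial * j.factorial = (k + j).factorial :=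
    Nat.add_choose_mul_factorial_mul_factorial k j
  have h2 : l.choose j * j.factorial * (l - j).factorial = l.factorial :=
    Nat.choose_mul_factorial_mul_factorial hj
  have h3 : (k + j).choose k = (k + j).choose j := Nat.choose_symm_add
  have hj0 : (j.factorial : ℂ) ≠ 0 := Nat.cast_ne_zero.mpr (Nat.factorial_ne_zero j)
  apply mul_right_cancel₀ hj0
  rw [h3]
  push_cast [← h1, ← h2]
  ring

lemma hdeg_pair (a b : ℕ) : (Finsupp.single 0 a + Finsupp.single 1 b : Fin 2 →₀ ℕ).degree = a + b := by
  rw [degree_eq]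
  simp [Finsupp.single_apply]

end TwistedAux

open TwistedAux Finset in
/-- Explicit expression for the depth-two twisted multiple Bernoulli numbers:
`ℬ(k,l;ξ₁,ξ₂;γ₁,γ₂) = Σ_{j=0}^{l} C(l,j)·ℬ_{k+j}(ξ₁)·ℬ_{l−j}(ξ₂)·γ₁^{k+j}·γ₂^{l−j}`. -/
theorem multipleTwistedBernoulli_two (γ₁ γ₂ ξ₁ ξ₂ : ℂ) (h₁ : ξ₁ ≠ 1) (h₂ : ξ₂ ≠ 1)
    (k l : ℕ) :
    multipleTwistedBernoulli 2 ![ξ₁, ξ₂] ![γ₁, γ₂] ![k, l] =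
      ∑ j ∈ Finset.range (l + 1),
        (l.choose j : ℂ) * twistedBernoulli ξ₁ (k + j) * twistedBernoulli ξ₂ (l - j) *
          γ₁ ^ (k + j) * γ₂ ^ (l - j) := by
  classical
  set f₁ : PowerSeries ℂ := (1 - PowerSeries.C (R := ℂ) ξ₁ * PowerSeries.exp ℂ)⁻¹ with hf₁
  set f₂ : PowerSeries ℂ := (1 - PowerSeries.C (R := ℂ) ξ₂ * PowerSeries.exp ℂ)⁻¹ with hf₂
  set S0 : Finset (Fin 2) := Finset.univ.filter (fun k => (0 : Fin 2) ≤ k) with hS0def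
  set S1 : Finset (Fin 2) := Finset.univ.filter (fun k => (1 : Fin 2) ≤ k) with hS1def
  have hQ0 : Q S0 = MvPolynomial.X 0 + MvPolynomial.X 1 := by
    have : S0 = Finset.univ := by
      rw [hS0def]; apply Finset.filter_true_of_mem; intro x _; exact Fin.zero_le x
    rw [Q, this, Fin.sum_univ_two]
  have hQ1 : Q S1 = MvPolynomial.X 1 := by
    have : S1 = {1} := by rw [hS1def]; decide
    rw [Q, this, Finset.sum_singleton]
  have hprod :
      (∏ j : Fin 2, (1 - MvPowerSeries.C (σ := Fin 2) (R := ℂ) (![ξ₁, ξ₂] j) *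
          expShift 2 j (![γ₁, γ₂] j))⁻¹) = subst2 S0 γ₁ f₁ * subst2 S1 γ₂ f₂ := by
    rw [Fin.prod_univ_two]
    simp only [Matrix.cons_val_zero, Matrix.cons_val_one, Matrix.head_cons]
    rw [inv_eq 0 γ₁ ξ₁ h₁, inv_eq 1 γ₂ ξ₂ h₂]
  rw [multipleTwistedBernoulli, hprod]
  set D : Fin 2 →₀ ℕ := Finsupp.equivFunOnFinite.symm ![k, l] with hD
  have hD0 : D 0 = k := by simp [hD]
  have hD1 : D 1 = l := by simp [hD]
  rw [MvPowerSeries.coeff_mul]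
  have hleft : ∀ p ∈ Finset.HasAntidiagonal.antidiagonal D,
      ((Finsupp.single 0 (p.1 0) + Finsupp.single 1 (p.1 1),
        Finsupp.single 0 (k - p.1 0) + Finsupp.single 1 (l - p.1 1)) :
        (Fin 2 →₀ ℕ) × (Fin 2 →₀ ℕ)) = p := by
    intro p hp
    rw [Finset.HasAntidiagonal.mem_antidiagonal] at hp
    have h0 : p.1 0 + p.2 0 = k := by rw [← hD0, ← hp]; simp
    have h1 : p.1 1 + p.2 1 = l := by rw [← hD1, ← hp]; simp
    refine Prod.ext ?_ ?_
    · ext i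
      fin_cases i <;> simp [Finsupp.single_apply]
    · ext i
      fin_cases i <;> simp [Finsupp.single_apply] <;> omega
  have hsum : ∑ p ∈ Finset.HasAntidiagonal.antidiagonal D,
        MvPowerSeries.coeff (R := ℂ) p.1 (subst2 S0 γ₁ f₁) * MvPowerSeries.coeff (R := ℂ) p.2 (subst2 S1 γ₂ f₂)
      = ∑ q ∈ Finset.range (k + 1) ×ˢ Finset.range (l + 1),
          MvPowerSeries.coeff (R := ℂ) (Finsupp.single 0 q.1 + Finsupp.single 1 q.2) (subst2 S0 γ₁ f₁) *
          MvPowerSeries.coeff (R := ℂ) (Finsupp.single 0 (k - q.1) + Finsupp.single 1 (l - q.2))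
            (subst2 S1 γ₂ f₂) := by
    refine Finset.sum_nbij' (fun p => (p.1 0, p.1 1))
      (fun q => (Finsupp.single 0 q.1 + Finsupp.single 1 q.2,
        Finsupp.single 0 (k - q.1) + Finsupp.single 1 (l - q.2))) ?_ ?_ hleft ?_ ?_
    · intro p hp
      rw [Finset.HasAntidiagonal.mem_antidiagonal] at hp
      have h0 : p.1 0 + p.2 0 = k := by rw [← hD0, ← hp]; simp
      have h1 : p.1 1 + p.2 1 = l := by rw [← hD1, ← hp]; simp
      simp only [Finset.mem_product, Finset.mem_range]
      omega
    · intro q hq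
      simp only [Finset.mem_product, Finset.mem_range] at hq
      rw [Finset.HasAntidiagonal.mem_antidiagonal]
      ext i
      fin_cases i <;> simp [Finsupp.single_apply, hD] <;> omega
    · intro q hq
      simp [Finsupp.single_apply]
    · intro p hp
      conv_lhs => rw [← hleft p hp]
  rw [hsum, Finset.sum_product]
  have hA : ∀ a b : ℕ,
      MvPowerSeries.coeff (R := ℂ) (Finsupp.single 0 a + Finsupp.single 1 b) (subst2 S0 γ₁ f₁) =
        PowerSeries.coeff (R := ℂ) (a + b) f₁ * γ₁ ^ (a + b) * ((a + b).choose a : ℂ) := by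
    intro a b
    rw [coeff_subst2, hdeg_pair, hQ0, coeff_add_pow']
  have hB : ∀ a b : ℕ, a ≠ 0 →
      MvPowerSeries.coeff (R := ℂ) (Finsupp.single 0 a + Finsupp.single 1 b) (subst2 S1 γ₂ f₂) = 0 := by
    intro a b ha
    rw [coeff_subst2, hQ1, MvPolynomial.coeff_X_pow, if_neg, mul_zero]
    intro hcon
    have := congrFun (congrArg (fun f : Fin 2 →₀ ℕ => (f : Fin 2 → ℕ)) hcon) 0
    simp [Finsupp.single_apply] at this
    exact ha this.symm
  have hB2 : ∀ b : ℕ,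
      MvPowerSeries.coeff (R := ℂ) (Finsupp.single 0 0 + Finsupp.single 1 b) (subst2 S1 γ₂ f₂) =
        PowerSeries.coeff (R := ℂ) b f₂ * γ₂ ^ b := by
    intro b
    rw [Finsupp.single_zero, zero_add, coeff_subst2]
    have hdeg : (Finsupp.single 1 b : Fin 2 →₀ ℕ).degree = b := by
      rw [degree_eq]; simp [Finsupp.single_apply]
    rw [hdeg, hQ1, MvPolynomial.coeff_X_pow, if_pos rfl, mul_one]
  rw [Finset.sum_eq_single k]
  · have hin : ∀ b ∈ Finset.range (l + 1),
        MvPowerSeries.coeff (R := ℂ) (Finsupp.single 0 k + Finsupp.single 1 b) (subst2 S0 γ₁ f₁) *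
          MvPowerSeries.coeff (R := ℂ) (Finsupp.single 0 (k - k) + Finsupp.single 1 (l - b))
            (subst2 S1 γ₂ f₂) =
        (PowerSeries.coeff (R := ℂ) (k + b) f₁ * γ₁ ^ (k + b) * ((k + b).choose k : ℂ)) *
          (PowerSeries.coeff (R := ℂ) (l - b) f₂ * γ₂ ^ (l - b)) := by
      intro b _
      rw [hA, Nat.sub_self, hB2]
    rw [Finset.sum_congr rfl hin]
    simp only [Fin.prod_univ_two, Matrix.cons_val_zero, Matrix.cons_val_one, Matrix.head_cons]
    rw [Finset.mul_sum]
    refine Finset.sum_congr rfl fun b hb => ?_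
    rw [Finset.mem_range] at hb
    simp only [twistedBernoulli, ← hf₁, ← hf₂]
    linear_combination (PowerSeries.coeff (R := ℂ) (k + b) f₁ * PowerSeries.coeff (R := ℂ) (l - b) f₂ *
      γ₁ ^ (k + b) * γ₂ ^ (l - b)) * nat_id k l b (by omega)
  · intro a ha hak
    rw [Finset.mem_range] at ha
    apply Finset.sum_eq_zero
    intro b _
    rw [hB _ _ (by omega), mul_zero]
  · intro hk
    exact absurd (Finset.mem_range.mpr (by omega)) hk
end

section
/- Let r ≥ 1, let c ∈ ℕ with c ≥ 2, and let γ_1,…,γ_r ∈ ℂ. Then in ℂ[[t_1,…,t_r]] one has the identity ∏_{j=1}^r ( Σ_{m≥0} (1 − c^{m+1})·(B_{m+1}/(m+1))·γ_j^m·(t_j+⋯+t_r)^m/m! ) = Σ_{ξ_1,…,ξ_r ∈ μ_c∖{1}} ∏_{j=1}^r (1 − ξ_j·exp(γ_j(t_j+⋯+t_r)))⁻¹, where the sum on the right is over all r-tuples of c-th roots of unity different from 1. -/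
namespace ProofAux

section PartA
open Polynomial Finset

variable {c : ℕ}

lemma root_ne_zero (hc : 0 < c) {ξ : ℂ} (hξ : ξ ∈ nthRootsFinset c (1 : ℂ)) : ξ ≠ 0 :=
  ne_zero_of_mem_nthRootsFinset one_ne_zero hξ

lemma inv_mem (hc : 0 < c) {ξ : ℂ} (hξ : ξ ∈ nthRootsFinset c (1 : ℂ)) :
    ξ⁻¹ ∈ nthRootsFinset c (1 : ℂ) := by
  rw [mem_nthRootsFinset hc] at hξ ⊢
  rw [inv_pow, hξ, inv_one]

lemma prod_X_sub_C (hc : 0 < c) :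
    ∏ ζ ∈ nthRootsFinset c (1 : ℂ), (X - C ζ) = X ^ c - 1 := by
  exact (X_pow_sub_one_eq_prod hc (Complex.isPrimitiveRoot_exp c hc.ne')).symm

lemma prod_erase_X_sub_C (hc : 0 < c) :
    ∏ ζ ∈ (nthRootsFinset c (1 : ℂ)).erase 1, (X - C ζ) = ∑ i ∈ range c, X ^ i := by
  have h1 : (1 : ℂ) ∈ nthRootsFinset c (1 : ℂ) := one_mem_nthRootsFinset hc
  have h := prod_X_sub_C hc
  rw [← Finset.mul_prod_erase _ _ h1] at h
  have hg : (∑ i ∈ range c, (X : ℂ[X]) ^ i) * (X - 1) = X ^ c - 1 := geom_sum_mul X c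
  have hX1 : (X - C 1 : ℂ[X]) ≠ 0 := X_sub_C_ne_zero 1
  apply mul_left_cancel₀ hX1
  rw [h, map_one]
  rw [mul_comm] at hg
  rw [hg]

lemma prod_one_sub (hc : 0 < c) :
    ∏ ζ ∈ (nthRootsFinset c (1 : ℂ)).erase 1, (1 - ζ) = (c : ℂ) := by
  have h := congrArg (Polynomial.eval 1) (prod_erase_X_sub_C hc)
  simpa [eval_prod] using h


-- A6
lemma prod_erase_eval (hc : 0 < c) {ζ : ℂ} (hζ : ζ ∈ nthRootsFinset c (1 : ℂ)) :
    ∏ η ∈ (nthRootsFinset c (1 : ℂ)).erase ζ⁻¹, (1 - η * ζ) = (c : ℂ) := by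
  have hζ0 : ζ ≠ 0 := ne_zero_of_mem_nthRootsFinset one_ne_zero hζ
  rw [← prod_one_sub hc]
  refine Finset.prod_nbij' (fun η => ζ * η) (fun θ => ζ⁻¹ * θ) ?_ ?_ ?_ ?_ ?_
  · intro η hη
    rw [Finset.mem_erase] at hη ⊢
    exact ⟨fun h => hη.1 (eq_inv_of_mul_eq_one_right h),
      by simpa using mul_mem_nthRootsFinset hζ hη.2⟩
  · intro θ hθ
    rw [Finset.mem_erase] at hθ ⊢
    refine ⟨fun h => hθ.1 ?_, by simpa using mul_mem_nthRootsFinset (inv_mem hc hζ) hθ.2⟩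
    have := mul_left_cancel₀ (inv_ne_zero hζ0) (h.trans (mul_one ζ⁻¹).symm)
    exact this
  · intro η _
    field_simp
  · intro θ _
    field_simp
  · intro η _
    ring


-- A7 : partial fractions polynomial identity
lemma pfrac (hc : 2 ≤ c) :
    ∑ ξ ∈ nthRootsFinset c (1 : ℂ), ∏ η ∈ (nthRootsFinset c (1 : ℂ)).erase ξ, (1 - C η * X)
      = C (c : ℂ) := by
  have hc0 : 0 < c := by omega
  have hprim := Complex.isPrimitiveRoot_exp c hc0.ne'
  rw [← sub_eq_zero]
  apply Polynomial.eq_zero_of_natDegree_lt_card_of_eval_eq_zero'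
      _ (nthRootsFinset c (1 : ℂ))
  · intro ζ hζ
    have hζ0 : ζ ≠ 0 := ne_zero_of_mem_nthRootsFinset one_ne_zero hζ
    have hinv : ζ⁻¹ ∈ nthRootsFinset c (1 : ℂ) := inv_mem hc0 hζ
    rw [eval_sub, eval_C, eval_finset_sum, sub_eq_zero]
    rw [Finset.sum_eq_single_of_mem ζ⁻¹ hinv]
    · rw [eval_prod]
      simp only [eval_sub, eval_one, eval_mul, eval_C, eval_X]
      exact prod_erase_eval hc0 hζ
    · intro ξ hξ hne
      rw [eval_prod]
      apply Finset.prod_eq_zero (i := ζ⁻¹)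
      · exact Finset.mem_erase.mpr ⟨fun h => hne h.symm, hinv⟩
      · simp [inv_mul_cancel₀ hζ0]
  · rw [hprim.card_nthRootsFinset]
    have hdeg : ∀ ξ ∈ nthRootsFinset c (1 : ℂ),
        (∏ η ∈ (nthRootsFinset c (1 : ℂ)).erase ξ, (1 - C η * X)).natDegree ≤ c - 1 := by
      intro ξ hξ
      refine (Polynomial.natDegree_prod_le _ _).trans ?_
      calc ∑ η ∈ (nthRootsFinset c (1 : ℂ)).erase ξ, (1 - C η * X).natDegree
          ≤ ∑ η ∈ (nthRootsFinset c (1 : ℂ)).erase ξ, 1 := by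
            apply Finset.sum_le_sum
            intro η _
            refine (Polynomial.natDegree_sub_le _ _).trans ?_
            simp only [natDegree_one, max_eq_right, Nat.zero_le]
            exact (natDegree_C_mul_le η X).trans (by simp)
        _ ≤ c - 1 := by
            rw [Finset.sum_const, smul_eq_mul, mul_one]
            rw [Finset.card_erase_of_mem hξ, hprim.card_nthRootsFinset]
    refine lt_of_le_of_lt ((Polynomial.natDegree_sub_le _ _).trans ?_) (show c - 1 < c by omega)
    simp only [natDegree_C, max_le_iff]
    constructor
    · exact Polynomial.natDegree_sum_le_of_forall_le _ _ hdeg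
    · omega

-- A8
lemma prod_one_sub_C_mul_X (hc : 0 < c) :
    ∏ ξ ∈ nthRootsFinset c (1 : ℂ), (1 - C ξ * X) = 1 - X ^ c := by
  have hneg : ∏ ξ ∈ nthRootsFinset c (1 : ℂ), (-ξ) = -1 := by
    have h := congrArg (Polynomial.eval 0) (prod_X_sub_C hc)
    simpa [eval_prod, zero_pow hc.ne'] using h
  have step1 : ∏ ξ ∈ nthRootsFinset c (1 : ℂ), (1 - C ξ * X)
      = ∏ ξ ∈ nthRootsFinset c (1 : ℂ), (1 - C ξ⁻¹ * X) := by
    refine Finset.prod_nbij' (fun ξ => ξ⁻¹) (fun ξ => ξ⁻¹) ?_ ?_ ?_ ?_ ?_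
    · intro ξ hξ; exact inv_mem hc hξ
    · intro ξ hξ; exact inv_mem hc hξ
    · intro ξ hξ; simp [inv_inv]
    · intro ξ hξ; simp [inv_inv]
    · intro ξ hξ; simp [inv_inv]
  have step2 : ∀ ξ ∈ nthRootsFinset c (1 : ℂ),
      (1 - C ξ⁻¹ * X : ℂ[X]) = C (-ξ⁻¹) * (X - C ξ) := by
    intro ξ hξ
    have hξ0 : ξ ≠ 0 := ne_zero_of_mem_nthRootsFinset one_ne_zero hξ
    rw [mul_sub, ← C_mul, map_neg]
    field_simp
    rw [map_neg, map_one]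
    ring
  rw [step1, Finset.prod_congr rfl step2, Finset.prod_mul_distrib, ← map_prod,
    prod_X_sub_C hc]
  have : ∏ ξ ∈ nthRootsFinset c (1 : ℂ), (-ξ⁻¹) = -1 := by
    have : ∀ ξ ∈ nthRootsFinset c (1 : ℂ), (-ξ⁻¹ : ℂ) = (-ξ)⁻¹ := by
      intro ξ hξ; rw [← inv_neg]
    rw [Finset.prod_congr rfl this, Finset.prod_inv_distrib, hneg]
    norm_num
  rw [this]
  simp only [map_neg, map_one]
  ring


end PartA

section PartB
open Polynomial Finset PowerSeries

variable {c : ℕ}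

/-- exp(γ X) -/
noncomputable def Es (γ : ℂ) : PowerSeries ℂ := PowerSeries.rescale γ (PowerSeries.exp ℂ)

/-- the Bernoulli-type series -/
noncomputable def Bs (c : ℕ) (γ : ℂ) : PowerSeries ℂ :=
  PowerSeries.mk fun n =>
    (1 - (c : ℂ) ^ (n + 1)) * (bernoulli (n + 1) : ℂ) / ((n : ℂ) + 1) * γ ^ n
      / (n.factorial : ℂ)

lemma coeff_Es (γ : ℂ) (n : ℕ) :
    PowerSeries.coeff n (Es γ) = γ ^ n / (n.factorial : ℂ) := by
  rw [Es, coeff_rescale, coeff_exp]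
  rw [div_eq_mul_inv, div_eq_mul_inv]
  push_cast
  simp [div_eq_mul_inv]

lemma constantCoeff_Es (γ : ℂ) : PowerSeries.constantCoeff (Es γ) = 1 := by
  have h := coeff_Es γ 0
  rw [coeff_zero_eq_constantCoeff] at h
  rw [h]
  norm_num

lemma rescale_Bs (γ : ℂ) : PowerSeries.rescale γ (Bs c 1) = Bs c γ := by
  ext n
  rw [coeff_rescale, Bs, Bs, coeff_mk, coeff_mk]
  ring

-- B1
lemma X_mul_Bs :
    (PowerSeries.X : PowerSeries ℂ) * Bs c 1
      = bernoulliPowerSeries ℂ - PowerSeries.rescale (c : ℂ) (bernoulliPowerSeries ℂ) := by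
  ext n
  rw [map_sub, coeff_rescale, bernoulliPowerSeries]
  cases n with

  | zero => simp
  | succ m =>
    rw [PowerSeries.coeff_succ_X_mul, Bs, coeff_mk]
    have h1 : ((m + 1).factorial : ℂ) ≠ 0 := by exact_mod_cast (m+1).factorial_ne_zero
    have h2 : ((m : ℂ) + 1) ≠ 0 := Nat.cast_add_one_ne_zero m
    have h3 : (m.factorial : ℂ) ≠ 0 := by exact_mod_cast m.factorial_ne_zero
    have hfac : ((m + 1).factorial : ℂ) = ((m : ℂ) + 1) * (m.factorial : ℂ) := by
      rw [Nat.factorial_succ]; push_cast; ring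
    have hmap : ∀ q : ℚ, algebraMap ℚ ℂ q = (q : ℂ) := fun q => by
      simp [Algebra.algebraMap_eq_smul_one, Rat.smul_one_eq_cast]
    rw [coeff_mk, hmap]
    push_cast
    field_simp
    rw [hfac]
    ring


-- B4' at γ = 1
lemma master_one (c : ℕ) :
    Bs c 1 * (1 - PowerSeries.exp ℂ) * (1 - (PowerSeries.exp ℂ) ^ c)
      = PowerSeries.C (c : ℂ) * (1 - PowerSeries.exp ℂ) - (1 - (PowerSeries.exp ℂ) ^ c) := by
  set e := PowerSeries.exp ℂ with he
  set Bb := bernoulliPowerSeries ℂ with hBb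
  have h1 : Bb * (1 - e) = -PowerSeries.X := by
    have := bernoulliPowerSeries_mul_exp_sub_one ℂ
    linear_combination -this
  have h2 : PowerSeries.rescale (c : ℂ) Bb * (1 - e ^ c)
      = -(PowerSeries.C (c : ℂ) * PowerSeries.X) := by
    have hec : e ^ c = PowerSeries.rescale (c : ℂ) e := exp_pow_eq_rescale_exp c
    have := congrArg (PowerSeries.rescale (c : ℂ)) (bernoulliPowerSeries_mul_exp_sub_one ℂ)
    rw [map_mul, map_sub, map_one, rescale_X] at this
    rw [hec]
    linear_combination -this
  have hB1 : (PowerSeries.X : PowerSeries ℂ) * Bs c 1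
      = Bb - PowerSeries.rescale (c : ℂ) Bb := X_mul_Bs
  apply mul_left_cancel₀ (PowerSeries.X_ne_zero (R := ℂ))
  linear_combination ((1 - e) * (1 - e ^ c)) * hB1 + (1 - e ^ c) * h1 - (1 - e) * h2

-- B4
lemma master (c : ℕ) (γ : ℂ) :
    Bs c γ * (1 - Es γ) * (1 - (Es γ) ^ c)
      = PowerSeries.C (c : ℂ) * (1 - Es γ) - (1 - (Es γ) ^ c) := by
  have := congrArg (PowerSeries.rescale γ) (master_one c)
  simp only [map_mul, map_sub, map_one, map_pow, rescale_Bs] at this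
  rw [map_natCast (PowerSeries.C (R := ℂ)) c, map_natCast (PowerSeries.rescale γ) c] at this
  rw [map_natCast (PowerSeries.C (R := ℂ)) c]
  exact this


lemma aeval_C' (x : PowerSeries ℂ) (a : ℂ) :
    Polynomial.aeval x (Polynomial.C a) = PowerSeries.C a := by
  rw [Polynomial.aeval_C]
  rfl

-- B5
lemma prod_roots (hc : 0 < c) (γ : ℂ) :
    (1 : PowerSeries ℂ) - (Es γ) ^ c
      = ∏ ξ ∈ nthRootsFinset c (1 : ℂ), (1 - PowerSeries.C ξ * Es γ) := by
  have h := congrArg (Polynomial.aeval (Es γ)) (prod_one_sub_C_mul_X hc)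
  simp only [map_prod, map_sub, map_one, map_mul, map_pow, Polynomial.aeval_X, aeval_C'] at h
  rw [← h]

-- B6
lemma sum_prod_roots (hc : 2 ≤ c) (γ : ℂ) :
    ∑ ξ ∈ nthRootsFinset c (1 : ℂ), ∏ η ∈ (nthRootsFinset c (1 : ℂ)).erase ξ,
        ((1 : PowerSeries ℂ) - PowerSeries.C η * Es γ)
      = PowerSeries.C (c : ℂ) := by
  have h := congrArg (Polynomial.aeval (Es γ)) (pfrac hc)
  simp only [map_sum, map_prod, map_sub, map_one, map_mul, Polynomial.aeval_X, aeval_C'] at h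
  rw [← h]

-- scalar sum lemma
lemma sum_inv_one_sub (hc : 0 < c) :
    ∑ ξ ∈ (nthRootsFinset c (1 : ℂ)).erase 1, (1 - ξ)⁻¹ = ((c : ℂ) - 1) / 2 := by
  have hprim := Complex.isPrimitiveRoot_exp c hc.ne'
  set t := (nthRootsFinset c (1 : ℂ)).erase 1 with ht
  have hmemt : ∀ ξ, ξ ∈ t → ξ⁻¹ ∈ t := by
    intro ξ hξ
    rw [ht, Finset.mem_erase] at hξ ⊢
    exact ⟨fun h => hξ.1 (by rw [← inv_inv ξ, h, inv_one]), inv_mem hc hξ.2⟩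
  have hre : ∑ ξ ∈ t, (1 - ξ)⁻¹ = ∑ ξ ∈ t, (1 - ξ⁻¹)⁻¹ := by
    refine Finset.sum_nbij' (fun ξ => ξ⁻¹) (fun ξ => ξ⁻¹) ?_ ?_ ?_ ?_ ?_
    · intro ξ hξ; exact hmemt ξ hξ
    · intro ξ hξ; exact hmemt ξ hξ
    · intro ξ _; simp
    · intro ξ _; simp
    · intro ξ _; simp
  have hpair : ∀ ξ ∈ t, (1 - ξ)⁻¹ + (1 - ξ⁻¹)⁻¹ = 1 := by
    intro ξ hξ
    rw [ht, Finset.mem_erase] at hξ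
    have h0 : ξ ≠ 0 := ne_zero_of_mem_nthRootsFinset one_ne_zero hξ.2
    have h1 : (1 : ℂ) - ξ ≠ 0 := fun h => hξ.1 (by linear_combination -h)
    have h2 : (1 : ℂ) - ξ⁻¹ ≠ 0 := by
      intro h
      apply hξ.1
      have h' : ξ⁻¹ = 1 := by linear_combination -h
      rw [← inv_inv ξ, h', inv_one]
    rw [inv_eq_one_div, inv_eq_one_div, div_add_div _ _ h1 h2,
      div_eq_one_iff_eq (mul_ne_zero h1 h2)]
    field_simp
    ring
  have hcard : t.card = c - 1 := by
    rw [ht, Finset.card_erase_of_mem (one_mem_nthRootsFinset hc), hprim.card_nthRootsFinset]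
  have h2S : (2 : ℂ) * ∑ ξ ∈ t, (1 - ξ)⁻¹ = (c : ℂ) - 1 := by
    have hs := Finset.sum_congr rfl hpair
    rw [Finset.sum_add_distrib, ← hre, Finset.sum_const, hcard, nsmul_eq_mul, mul_one,
      Nat.cast_sub hc, Nat.cast_one] at hs
    linear_combination hs
  linear_combination h2S / 2

lemma constCoeff_factor {ξ γ : ℂ} :
    PowerSeries.constantCoeff (1 - PowerSeries.C ξ * Es γ) = 1 - ξ := by
  rw [map_sub, map_one, map_mul, constantCoeff_C, constantCoeff_Es, mul_one]

lemma one_sub_ne {ξ : ℂ} (h : ξ ≠ 1) : (1 : ℂ) - ξ ≠ 0 :=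
  fun hh => h (by linear_combination -hh)

-- B7 : the key one-variable identity
lemma key (hc : 2 ≤ c) (γ : ℂ) :
    ∑ ξ ∈ (nthRootsFinset c (1 : ℂ)).erase 1, (1 - PowerSeries.C ξ * Es γ)⁻¹ = Bs c γ := by
  have hc0 : 0 < c := by omega
  set s := nthRootsFinset c (1 : ℂ) with hs
  set t := s.erase 1 with htdef
  rcases eq_or_ne γ 0 with hγ | hγ
  · -- γ = 0 : everything is constant
    subst hγ
    have hEs0 : Es 0 = 1 := by
      rw [Es, rescale_zero]
      simp [PowerSeries.constantCoeff_exp]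
    have hBs0 : Bs c 0 = PowerSeries.C (((c : ℂ) - 1) / 2) := by
      ext n
      rw [Bs, coeff_mk, PowerSeries.coeff_C]
      cases n with
      | zero => simp [_root_.bernoulli_one]; ring
      | succ m => simp
    rw [hEs0, hBs0, ← sum_inv_one_sub hc0]
    rw [map_sum]
    apply Finset.sum_congr rfl
    intro ξ hξ
    rw [htdef, Finset.mem_erase] at hξ
    have h1 : (1 : ℂ) - ξ ≠ 0 := one_sub_ne hξ.1
    rw [mul_one]
    rw [PowerSeries.inv_eq_iff_mul_eq_one (by simp [h1])]
    rw [show (1 : PowerSeries ℂ) - PowerSeries.C ξ = PowerSeries.C (1 - ξ) by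
      rw [map_sub, map_one]]
    rw [← map_mul, inv_mul_cancel₀ h1, map_one]
  · -- γ ≠ 0
    have hconst : ∀ ξ ∈ t, PowerSeries.constantCoeff (1 - PowerSeries.C ξ * Es γ) ≠ 0 := by
      intro ξ hξ
      rw [htdef, Finset.mem_erase] at hξ
      rw [constCoeff_factor]
      exact one_sub_ne hξ.1
    set V := ∏ ξ ∈ t, (1 - PowerSeries.C ξ * Es γ) with hV
    have hV0 : V ≠ 0 := by
      intro h
      have : PowerSeries.constantCoeff V = 0 := by rw [h, map_zero]
      rw [hV, map_prod] at this
      obtain ⟨ξ, hξ, hz⟩ := Finset.prod_eq_zero_iff.mp this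
      exact hconst ξ hξ hz
    set P := ∑ ξ ∈ t, ∏ η ∈ t.erase ξ, (1 - PowerSeries.C η * Es γ) with hP
    -- step 1 : V * (sum of inverses) = P
    have step1 : V * ∑ ξ ∈ t, (1 - PowerSeries.C ξ * Es γ)⁻¹ = P := by
      rw [Finset.mul_sum, hP]
      apply Finset.sum_congr rfl
      intro ξ hξ
      rw [hV, ← Finset.mul_prod_erase t _ hξ]
      rw [mul_comm (1 - PowerSeries.C ξ * Es γ), mul_assoc,
        PowerSeries.mul_inv_cancel _ (hconst ξ hξ), mul_one]
    -- step 2 : Bs * V = P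
    have hne : (1 : PowerSeries ℂ) - Es γ ≠ 0 := by
      intro h
      have := congrArg (PowerSeries.coeff 1) h
      rw [map_sub, coeff_Es, map_zero, PowerSeries.coeff_one] at this
      simp at this
      exact hγ (by simpa using this)
    have hB5' : (1 : PowerSeries ℂ) - (Es γ) ^ c = (1 - Es γ) * V := by
      rw [prod_roots hc0 γ,
        ← Finset.mul_prod_erase _ _ (one_mem_nthRootsFinset hc0 (R := ℂ)), map_one, one_mul]
    have hB6' : (1 - Es γ) * P = PowerSeries.C (c : ℂ) - V := by
      have hsplit : V + ∑ ξ ∈ t, ∏ η ∈ s.erase ξ, (1 - PowerSeries.C η * Es γ)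
          = PowerSeries.C (c : ℂ) := by
        rw [← sum_prod_roots hc γ]
        exact Finset.add_sum_erase s
          (fun ξ => ∏ η ∈ s.erase ξ, (1 - PowerSeries.C η * Es γ))
          (one_mem_nthRootsFinset hc0)
      have hterm : ∀ ξ ∈ t, ∏ η ∈ s.erase ξ, (1 - PowerSeries.C η * Es γ)
          = (1 - Es γ) * ∏ η ∈ t.erase ξ, (1 - PowerSeries.C η * Es γ) := by
        intro ξ hξ
        rw [htdef, Finset.mem_erase] at hξ
        have h1mem : (1 : ℂ) ∈ s.erase ξ :=
          Finset.mem_erase.mpr ⟨fun h => hξ.1 h.symm, one_mem_nthRootsFinset hc0⟩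
        rw [← Finset.mul_prod_erase _ _ h1mem, map_one, one_mul, Finset.erase_right_comm]
      rw [Finset.sum_congr rfl hterm, ← Finset.mul_sum, ← hP] at hsplit
      linear_combination hsplit
    have hB4 := master c γ
    have h : (1 - Es γ) * ((1 - Es γ) * (Bs c γ * V)) = (1 - Es γ) * ((1 - Es γ) * P) := by
      linear_combination hB4 - (Bs c γ * (1 - Es γ) + 1) * hB5' - (1 - Es γ) * hB6'
    have step2 : Bs c γ * V = P :=
      mul_left_cancel₀ hne (mul_left_cancel₀ hne h)
    apply mul_left_cancel₀ hV0
    rw [step1, ← step2]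
    ring

end PartB

section PartC
open Finset PowerSeries

/-- t_j + ... + t_r as a multivariate power series -/
noncomputable def Tps (r : ℕ) (j : Fin r) : MvPowerSeries (Fin r) ℂ :=
  ∑ k ∈ Finset.univ.filter fun k => j ≤ k, MvPowerSeries.X k

lemma degree_eq {r : ℕ} (d : Fin r →₀ ℕ) : d.degree = d.sum fun _ e => e := rfl

lemma deg_add {r : ℕ} (a b : Fin r →₀ ℕ) :
    ((a + b).sum fun _ e => e) = (a.sum fun _ e => e) + (b.sum fun _ e => e) :=
  Finsupp.sum_add_index' (fun _ => rfl) (fun _ _ _ => rfl)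

lemma coeff_Tps_pow {r : ℕ} (j : Fin r) (m : ℕ) (d : Fin r →₀ ℕ)
    (h : (d.sum fun _ e => e) ≠ m) :
    MvPowerSeries.coeff d ((Tps r j) ^ m) = 0 := by
  have hcoe : Tps r j = (((∑ k ∈ Finset.univ.filter fun k => j ≤ k,
      MvPolynomial.X k : MvPolynomial (Fin r) ℂ)) : MvPowerSeries (Fin r) ℂ) := by
    have hms := map_sum (MvPolynomial.coeToMvPowerSeries.ringHom (σ := Fin r) (R := ℂ))
      (fun k => MvPolynomial.X k) (Finset.univ.filter fun k => j ≤ k)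
    simp only [MvPolynomial.coeToMvPowerSeries.ringHom_apply, MvPolynomial.coe_X] at hms
    rw [Tps, hms]
  rw [hcoe, ← MvPolynomial.coe_pow, MvPolynomial.coeff_coe]
  have hhom : MvPolynomial.IsHomogeneous
      (∑ k ∈ Finset.univ.filter fun k => j ≤ k, MvPolynomial.X k : MvPolynomial (Fin r) ℂ) 1 :=
    MvPolynomial.IsHomogeneous.sum _ _ _ fun k _ => MvPolynomial.isHomogeneous_X _ _
  have hpow := hhom.pow m
  rw [one_mul] at hpow
  exact hpow.coeff_eq_zero (by rw [degree_eq]; exact h)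

/-- substitution X ↦ t_j + ⋯ + t_r, as a bare function -/
noncomputable def phiFun (r : ℕ) (j : Fin r) (f : PowerSeries ℂ) :
    MvPowerSeries (Fin r) ℂ :=
  fun d => PowerSeries.coeff (d.sum fun _ e => e) f *
    MvPowerSeries.coeff d ((Tps r j) ^ (d.sum fun _ e => e))

lemma coeff_phiFun {r : ℕ} (j : Fin r) (f : PowerSeries ℂ) (d : Fin r →₀ ℕ) :
    MvPowerSeries.coeff d (phiFun r j f)
      = PowerSeries.coeff (d.sum fun _ e => e) f *
        MvPowerSeries.coeff d ((Tps r j) ^ (d.sum fun _ e => e)) := rfl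

lemma phiFun_one (r : ℕ) (j : Fin r) : phiFun r j 1 = 1 := by
  apply MvPowerSeries.ext
  intro d
  rw [coeff_phiFun, PowerSeries.coeff_one, MvPowerSeries.coeff_one]
  by_cases h : (d.sum fun _ e => e) = 0
  · have hd : d = 0 := (Finsupp.degree_eq_zero_iff d).mp (by rw [degree_eq]; exact h)
    rw [if_pos h, if_pos hd, h, pow_zero, MvPowerSeries.coeff_one, if_pos hd, mul_one]
  · have hd : d ≠ 0 := fun hh => by subst hh; exact h (by simp)
    rw [if_neg h, if_neg hd, zero_mul]

lemma phiFun_mul (r : ℕ) (j : Fin r) (f g : PowerSeries ℂ) :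
    phiFun r j (f * g) = phiFun r j f * phiFun r j g := by
  apply MvPowerSeries.ext
  intro d
  rw [coeff_phiFun, MvPowerSeries.coeff_mul, PowerSeries.coeff_mul, Finset.sum_mul]
  have key : ∀ p ∈ Finset.HasAntidiagonal.antidiagonal (d.sum fun _ e => e),
      PowerSeries.coeff p.1 f * PowerSeries.coeff p.2 g *
        MvPowerSeries.coeff d ((Tps r j) ^ (d.sum fun _ e => e))
      = ∑ q ∈ Finset.HasAntidiagonal.antidiagonal d,
          PowerSeries.coeff p.1 f * PowerSeries.coeff p.2 g *
            (MvPowerSeries.coeff q.1 ((Tps r j) ^ p.1) *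
              MvPowerSeries.coeff q.2 ((Tps r j) ^ p.2)) := by
    intro p hp
    rw [Finset.HasAntidiagonal.mem_antidiagonal] at hp
    rw [← Finset.mul_sum]
    congr 1
    rw [← hp, pow_add, MvPowerSeries.coeff_mul]
  rw [Finset.sum_congr rfl key, Finset.sum_comm]
  apply Finset.sum_congr rfl
  intro q hq
  rw [Finset.HasAntidiagonal.mem_antidiagonal] at hq
  have hdeg : ((q.1.sum fun _ e => e) + (q.2.sum fun _ e => e)) = (d.sum fun _ e => e) := by
    rw [← deg_add, hq]
  rw [Finset.sum_eq_single_of_mem ((q.1.sum fun _ e => e), (q.2.sum fun _ e => e))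
    (Finset.HasAntidiagonal.mem_antidiagonal.mpr hdeg)]
  · rw [coeff_phiFun, coeff_phiFun]
    ring
  · intro p hp hne
    rw [Finset.HasAntidiagonal.mem_antidiagonal] at hp
    by_cases h1 : p.1 = (q.1.sum fun _ e => e)
    · have h2 : p.2 ≠ (q.2.sum fun _ e => e) := by
        intro h2
        exact hne (Prod.ext h1 h2)
      rw [coeff_Tps_pow j p.2 q.2 (fun hh => h2 hh.symm)]
      ring
    · rw [coeff_Tps_pow j p.1 q.1 (fun hh => h1 hh.symm)]
      ring

lemma phiFun_add (r : ℕ) (j : Fin r) (f g : PowerSeries ℂ) :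
    phiFun r j (f + g) = phiFun r j f + phiFun r j g := by
  apply MvPowerSeries.ext
  intro d
  rw [coeff_phiFun, map_add, map_add, add_mul, coeff_phiFun, coeff_phiFun]

/-- substitution X ↦ t_j + ⋯ + t_r, as a ring homomorphism -/
noncomputable def phi (r : ℕ) (j : Fin r) : PowerSeries ℂ →+* MvPowerSeries (Fin r) ℂ where
  toFun := phiFun r j
  map_zero' := by
    apply MvPowerSeries.ext
    intro d
    rw [coeff_phiFun]
    simp
  map_one' := phiFun_one r j
  map_add' := phiFun_add r j
  map_mul' := phiFun_mul r j

end PartC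

end ProofAux

/-- The series `Σ_{m≥0} (1 − c^{m+1})·(B_{m+1}/(m+1))·γ^m·(t_j+⋯+t_r)^m/m!`
in `ℂ[[t_1,…,t_r]]`, defined coefficientwise (the `m`-th summand is homogeneous of
degree `m`, so only `m = |d|` contributes to the coefficient at a monomial `d`). -/
noncomputable def bernoulliFactor (r : ℕ) (j : Fin r) (c : ℕ) (γ : ℂ) :
    MvPowerSeries (Fin r) ℂ :=
  fun d =>
    ((1 - (c : ℂ) ^ ((d.sum fun _ e => e) + 1)) *
        (bernoulli ((d.sum fun _ e => e) + 1) : ℂ) / (((d.sum fun _ e => e) : ℂ) + 1) *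
        γ ^ (d.sum fun _ e => e) / (Nat.factorial (d.sum fun _ e => e) : ℂ)) *
      MvPowerSeries.coeff (R := ℂ) d
        ((∑ k ∈ Finset.univ.filter fun k => j ≤ k, MvPowerSeries.X k) ^ (d.sum fun _ e => e))


namespace ProofAux

section PartD
open Polynomial Finset PowerSeries

lemma phi_apply {r : ℕ} (j : Fin r) (f : PowerSeries ℂ) : phi r j f = phiFun r j f := rfl

lemma phi_Es {r : ℕ} (j : Fin r) (γ : ℂ) : phi r j (Es γ) = expShift r j γ := by
  apply MvPowerSeries.ext
  intro d
  rw [phi_apply, coeff_phiFun, coeff_Es]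
  rfl

lemma phi_Bs {r : ℕ} (j : Fin r) (c : ℕ) (γ : ℂ) :
    phi r j (Bs c γ) = bernoulliFactor r j c γ := by
  apply MvPowerSeries.ext
  intro d
  rw [phi_apply, coeff_phiFun, Bs, PowerSeries.coeff_mk]
  simp only [bernoulliFactor, Tps, MvPowerSeries.coeff_apply]
  push_cast
  ring

lemma constantCoeff_phi {r : ℕ} (j : Fin r) (f : PowerSeries ℂ) :
    MvPowerSeries.constantCoeff (σ := Fin r) (R := ℂ) (phi r j f) = PowerSeries.constantCoeff f := by
  rw [← MvPowerSeries.coeff_zero_eq_constantCoeff_apply, phi_apply, coeff_phiFun]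
  rw [show ((0 : Fin r →₀ ℕ).sum fun _ e => e) = 0 from rfl, pow_zero]
  rw [MvPowerSeries.coeff_zero_eq_constantCoeff_apply, map_one, mul_one,
    PowerSeries.coeff_zero_eq_constantCoeff]

lemma phi_C {r : ℕ} (j : Fin r) (a : ℂ) :
    phi r j (PowerSeries.C a) = MvPowerSeries.C (σ := Fin r) (R := ℂ) a := by
  apply MvPowerSeries.ext
  intro d
  rw [phi_apply, coeff_phiFun, PowerSeries.coeff_C, MvPowerSeries.coeff_C]
  by_cases h : (d.sum fun _ e => e) = 0
  · have hd : d = 0 := (Finsupp.degree_eq_zero_iff d).mp h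
    rw [if_pos h, if_pos hd, h, pow_zero, MvPowerSeries.coeff_one, if_pos hd, mul_one]
  · have hd : d ≠ 0 := fun hh => by subst hh; exact h (by simp)
    rw [if_neg h, if_neg hd, zero_mul]

lemma phi_inv {r : ℕ} (j : Fin r) (f : PowerSeries ℂ)
    (h : PowerSeries.constantCoeff f ≠ 0) :
    phi r j f⁻¹ = (phi r j f)⁻¹ := by
  have hconst : MvPowerSeries.constantCoeff (σ := Fin r) (R := ℂ) (phi r j f) ≠ 0 := by
    rw [constantCoeff_phi]; exact h
  symm
  rw [MvPowerSeries.inv_eq_iff_mul_eq_one hconst, ← map_mul, mul_comm,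
    PowerSeries.mul_inv_cancel _ h, map_one]


end PartD

end ProofAux

/-- In `ℂ[[t_1,…,t_r]]`:
`∏_{j=1}^r Σ_{m≥0} (1 − c^{m+1})·(B_{m+1}/(m+1))·γ_j^m·(t_j+⋯+t_r)^m/m!
  = Σ_{ξ_1,…,ξ_r ∈ μ_c∖{1}} ∏_{j=1}^r (1 − ξ_j·exp(γ_j(t_j+⋯+t_r)))⁻¹`. -/
theorem prod_bernoulliFactor_eq_sum_roots (r : ℕ) (hr : 1 ≤ r) (c : ℕ) (hc : 2 ≤ c)
    (γ : Fin r → ℂ) :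
    (∏ j, bernoulliFactor r j c (γ j)) =
      ∑ ξ ∈ Fintype.piFinset fun _ : Fin r => (Polynomial.nthRootsFinset c (1 : ℂ)).erase 1,
        ∏ j, (1 - MvPowerSeries.C (σ := Fin r) (R := ℂ) (ξ j) * expShift r j (γ j))⁻¹ := by
  have hper : ∀ j : Fin r, bernoulliFactor r j c (γ j)
      = ∑ ξ ∈ (Polynomial.nthRootsFinset c (1 : ℂ)).erase 1,
          (1 - MvPowerSeries.C (σ := Fin r) (R := ℂ) ξ * expShift r j (γ j))⁻¹ := by
    intro j
    rw [← ProofAux.phi_Bs j c (γ j), ← ProofAux.key hc (γ j), map_sum]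
    apply Finset.sum_congr rfl
    intro ξ hξ
    rw [Finset.mem_erase] at hξ
    have hconst : PowerSeries.constantCoeff
        (1 - PowerSeries.C ξ * ProofAux.Es (γ j)) ≠ 0 := by
      rw [map_sub, map_one, map_mul, PowerSeries.constantCoeff_C,
        ProofAux.constantCoeff_Es, mul_one]
      exact ProofAux.one_sub_ne hξ.1
    rw [ProofAux.phi_inv j _ hconst, map_sub, map_one, map_mul, ProofAux.phi_C,
      ProofAux.phi_Es]
  calc (∏ j, bernoulliFactor r j c (γ j))
      = ∏ j, ∑ ξ ∈ (Polynomial.nthRootsFinset c (1 : ℂ)).erase 1,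
          (1 - MvPowerSeries.C (σ := Fin r) (R := ℂ) ξ * expShift r j (γ j))⁻¹ :=
        Finset.prod_congr rfl fun j _ => hper j
    _ = _ := Finset.prod_univ_sum _ _
end

section
/- Let p be a prime, let c ∈ ℕ with c ≥ 2 and gcd(c,p) = 1, and let n ∈ ℕ₀. Then Σ_{ρ ∈ μ_p} Σ_{ξ ∈ μ_c, ξ ≠ 1} ℬ_n(ρ·ξ) = p^{n+1}·(1 − c^{n+1})·B_{n+1}/(n+1). (Every product ρ·ξ is different from 1 since μ_p ∩ μ_c = {1} by gcd(c,p) = 1 and ξ ≠ 1.) -/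
open Polynomial Finset

namespace TwistedAux

lemma eval_prod_X_sub (k : ℕ) (hk : k ≠ 0) (x : ℂ) :
    ∏ ρ ∈ nthRootsFinset k (1 : ℂ), (x - ρ) = x ^ k - 1 := by
  have h := (X_pow_sub_one_eq_prod (R := ℂ) (Nat.pos_of_ne_zero hk)
    (Complex.isPrimitiveRoot_exp k hk)).symm
  have := congrArg (Polynomial.eval x) h
  simpa [eval_prod] using this

lemma card_nthRoots (k : ℕ) (hk : k ≠ 0) : (nthRootsFinset k (1 : ℂ)).card = k :=
  (Complex.isPrimitiveRoot_exp k hk).card_nthRootsFinset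

lemma poly_prod (k : ℕ) (hk : k ≠ 0) (ζ : ℂ) (hζ : ζ ≠ 0) :
    ∏ ρ ∈ nthRootsFinset k (1 : ℂ), (1 - Polynomial.C (ρ * ζ) * Polynomial.X) =
      1 - Polynomial.C (ζ ^ k) * Polynomial.X ^ k := by
  apply eq_of_infinite_eval_eq
  apply Set.Infinite.mono (s := ({0}ᶜ : Set ℂ))
  swap
  · exact Set.Finite.infinite_compl (Set.finite_singleton 0)
  intro y hy
  have hy0 : y ≠ 0 := hy
  have hw : ζ * y ≠ 0 := mul_ne_zero hζ hy0
  simp only [Set.mem_setOf_eq, eval_prod, eval_sub, eval_one, eval_mul, eval_C, eval_X, eval_pow]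
  have key : ∀ ρ ∈ nthRootsFinset k (1 : ℂ), 1 - ρ * ζ * y = (ζ * y) * ((ζ * y)⁻¹ - ρ) := by
    intro ρ _
    field_simp
  rw [Finset.prod_congr rfl key, Finset.prod_mul_distrib, Finset.prod_const,
    card_nthRoots k hk, eval_prod_X_sub k hk]
  rw [mul_sub, ← mul_pow, mul_inv_cancel₀ hw, one_pow, mul_one, mul_pow]

lemma derivative_finset_prod (s : Finset ℂ) (f : ℂ → Polynomial ℂ) :
    Polynomial.derivative (∏ i ∈ s, f i)
      = ∑ i ∈ s, (∏ j ∈ s.erase i, f j) * Polynomial.derivative (f i) := by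
  induction s using Finset.induction_on with
  | empty => simp
  | insert a s ha ih =>
    rw [Finset.prod_insert ha, derivative_mul, Finset.sum_insert ha,
      Finset.erase_insert ha, ih, Finset.mul_sum]
    congr 1
    · exact mul_comm _ _
    · apply Finset.sum_congr rfl
      intro i hi
      rw [Finset.erase_insert_of_ne (ne_of_mem_of_not_mem hi ha).symm,
        Finset.prod_insert (fun h => ha (Finset.mem_of_mem_erase h)), mul_assoc]

lemma poly_sum (k : ℕ) (hk : k ≠ 0) (ζ : ℂ) (hζ : ζ ≠ 0) :
    ∑ ρ ∈ nthRootsFinset k (1 : ℂ), ∏ ρ' ∈ (nthRootsFinset k (1 : ℂ)).erase ρ,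
      (1 - Polynomial.C (ρ' * ζ) * Polynomial.X) = Polynomial.C (k : ℂ) := by
  have hderiv : ∑ ρ ∈ nthRootsFinset k (1 : ℂ), ∏ ρ' ∈ (nthRootsFinset k (1 : ℂ)).erase ρ,
      (Polynomial.X - Polynomial.C ρ') = Polynomial.C (k : ℂ) * Polynomial.X ^ (k - 1) := by
    have h := (X_pow_sub_one_eq_prod (R := ℂ) (Nat.pos_of_ne_zero hk)
      (Complex.isPrimitiveRoot_exp k hk))
    have h2 := congrArg Polynomial.derivative h
    rw [derivative_finset_prod] at h2
    simp only [derivative_sub, derivative_X, derivative_C, sub_zero, mul_one,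
      derivative_one, derivative_X_pow] at h2
    exact h2.symm
  apply eq_of_infinite_eval_eq
  apply Set.Infinite.mono (s := ({0}ᶜ : Set ℂ))
  swap
  · exact Set.Finite.infinite_compl (Set.finite_singleton 0)
  intro y hy
  have hy0 : y ≠ 0 := hy
  have hw : ζ * y ≠ 0 := mul_ne_zero hζ hy0
  simp only [Set.mem_setOf_eq, eval_finset_sum, eval_prod, eval_sub, eval_one, eval_mul,
    eval_C, eval_X]
  have key : ∀ ρ ∈ nthRootsFinset k (1 : ℂ), ∏ ρ' ∈ (nthRootsFinset k (1 : ℂ)).erase ρ,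
      (1 - ρ' * ζ * y) = (ζ * y) ^ (k - 1) * ∏ ρ' ∈ (nthRootsFinset k (1 : ℂ)).erase ρ,
        ((ζ * y)⁻¹ - ρ') := by
    intro ρ hρ
    have : ∀ ρ' ∈ (nthRootsFinset k (1 : ℂ)).erase ρ, 1 - ρ' * ζ * y
        = (ζ * y) * ((ζ * y)⁻¹ - ρ') := by
      intro ρ' _
      field_simp
    rw [Finset.prod_congr rfl this, Finset.prod_mul_distrib, Finset.prod_const,
      Finset.card_erase_of_mem hρ, card_nthRoots k hk]
  rw [Finset.sum_congr rfl key, ← Finset.mul_sum]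
  have h3 := congrArg (Polynomial.eval ((ζ * y)⁻¹)) hderiv
  simp only [eval_finset_sum, eval_prod, eval_sub, eval_X, eval_C, eval_mul, eval_pow] at h3
  rw [h3, inv_pow, mul_comm (↑k : ℂ), ← mul_assoc, mul_inv_cancel₀ (pow_ne_zero _ hw), one_mul]

lemma poly_geom (c : ℕ) (hc : c ≠ 0) :
    ∏ η ∈ (nthRootsFinset c (1 : ℂ)).erase 1, (1 - Polynomial.C η * Polynomial.X) =
      ∑ j ∈ range c, Polynomial.X ^ j := by
  apply eq_of_infinite_eval_eq
  apply Set.Infinite.mono (s := ({0, 1}ᶜ : Set ℂ))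
  swap
  · exact Set.Finite.infinite_compl (by simp)
  intro y hy
  simp only [Set.mem_compl_iff, Set.mem_insert_iff, Set.mem_singleton_iff, not_or] at hy
  obtain ⟨hy0, hy1⟩ := hy
  simp only [Set.mem_setOf_eq, eval_prod, eval_sub, eval_one, eval_mul, eval_C, eval_X,
    eval_finset_sum, eval_pow]
  have hfull := congrArg (Polynomial.eval y) (poly_prod c hc 1 one_ne_zero)
  simp only [eval_prod, eval_sub, eval_one, eval_mul, eval_C, eval_X, eval_pow, mul_one,
    one_pow] at hfull
  rw [← Finset.mul_prod_erase _ _ (one_mem_nthRootsFinset (Nat.pos_of_ne_zero hc)),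
    one_mul] at hfull
  have h1y : (1 : ℂ) - y ≠ 0 := sub_ne_zero.mpr (fun h => hy1 h.symm)
  apply mul_left_cancel₀ h1y
  rw [hfull]
  have := geom_sum_mul y c
  linear_combination this


lemma rescale_C' (a b : ℂ) : PowerSeries.rescale a (PowerSeries.C b) = PowerSeries.C b := by
  ext n
  simp only [PowerSeries.coeff_rescale, PowerSeries.coeff_C]
  split <;> simp_all

lemma const_coeff_f (a : ℂ) :
    PowerSeries.constantCoeff (1 - PowerSeries.C a * PowerSeries.exp ℂ) = 1 - a := by
  simp [PowerSeries.constantCoeff_exp]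

lemma ps_inv_rescale (pn : ℕ) (η : ℂ) (hη : η ≠ 1) :
    (1 - PowerSeries.C η * (PowerSeries.exp ℂ) ^ pn)⁻¹
      = PowerSeries.rescale (pn : ℂ) ((1 - PowerSeries.C η * PowerSeries.exp ℂ)⁻¹) := by
  have hc : PowerSeries.constantCoeff (1 - PowerSeries.C η * PowerSeries.exp ℂ) ≠ 0 := by
    rw [const_coeff_f]
    exact sub_ne_zero.mpr (Ne.symm hη)
  have hc2 : PowerSeries.constantCoeff
      (1 - PowerSeries.C η * (PowerSeries.exp ℂ) ^ pn) ≠ 0 := by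
    simpa [PowerSeries.constantCoeff_exp] using sub_ne_zero.mpr (Ne.symm hη)
  rw [eq_comm, PowerSeries.eq_inv_iff_mul_eq_one hc2, PowerSeries.exp_pow_eq_rescale_exp]
  have key : 1 - PowerSeries.C η * PowerSeries.rescale (pn : ℂ) (PowerSeries.exp ℂ)
      = PowerSeries.rescale (pn : ℂ) (1 - PowerSeries.C η * PowerSeries.exp ℂ) := by
    rw [map_sub, map_one, map_mul, rescale_C']
  rw [key, ← map_mul, PowerSeries.inv_mul_cancel _ hc, map_one]

lemma ps_prod (k : ℕ) (hk : k ≠ 0) (ζ : ℂ) (hζ : ζ ≠ 0) :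
    ∏ ρ ∈ nthRootsFinset k (1 : ℂ), (1 - PowerSeries.C (ρ * ζ) * PowerSeries.exp ℂ) =
      1 - PowerSeries.C (ζ ^ k) * (PowerSeries.exp ℂ) ^ k := by
  have h := congrArg (Polynomial.aeval (PowerSeries.exp ℂ)) (poly_prod k hk ζ hζ)
  simpa [map_prod, map_sub, map_mul, map_pow, Polynomial.aeval_C, Polynomial.aeval_X,
    PowerSeries.algebraMap_apply] using h

lemma ps_sum (k : ℕ) (hk : k ≠ 0) (ζ : ℂ) (hζ : ζ ≠ 0) :
    ∑ ρ ∈ nthRootsFinset k (1 : ℂ), ∏ ρ' ∈ (nthRootsFinset k (1 : ℂ)).erase ρ,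
      (1 - PowerSeries.C (ρ' * ζ) * PowerSeries.exp ℂ) = PowerSeries.C (k : ℂ) := by
  have h := congrArg (Polynomial.aeval (PowerSeries.exp ℂ)) (poly_sum k hk ζ hζ)
  simpa [map_prod, map_sum, map_sub, map_mul, map_pow, Polynomial.aeval_C, Polynomial.aeval_X,
    PowerSeries.algebraMap_apply] using h

lemma ps_geom (c : ℕ) (hc : c ≠ 0) :
    ∏ η ∈ (nthRootsFinset c (1 : ℂ)).erase 1, (1 - PowerSeries.C η * PowerSeries.exp ℂ) =
      ∑ j ∈ range c, (PowerSeries.exp ℂ) ^ j := by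
  have h := congrArg (Polynomial.aeval (PowerSeries.exp ℂ)) (poly_geom c hc)
  simpa [map_prod, map_sum, map_sub, map_mul, map_pow, Polynomial.aeval_C, Polynomial.aeval_X,
    PowerSeries.algebraMap_apply] using h

lemma ps_sum_inv (k : ℕ) (hk : k ≠ 0) (ζ : ℂ) (hζ : ζ ≠ 0) (hz : ζ ^ k ≠ 1) :
    ∑ ρ ∈ nthRootsFinset k (1 : ℂ), (1 - PowerSeries.C (ρ * ζ) * PowerSeries.exp ℂ)⁻¹
      = PowerSeries.C (k : ℂ) *
          (1 - PowerSeries.C (ζ ^ k) * (PowerSeries.exp ℂ) ^ k)⁻¹ := by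
  set P : PowerSeries ℂ := 1 - PowerSeries.C (ζ ^ k) * (PowerSeries.exp ℂ) ^ k with hPdef
  have hP : PowerSeries.constantCoeff P ≠ 0 := by
    simp only [hPdef, map_sub, map_one, map_mul, map_pow, PowerSeries.constantCoeff_C,
      PowerSeries.constantCoeff_exp, one_pow, mul_one]
    exact sub_ne_zero.mpr (Ne.symm hz)
  have hmul : (∑ ρ ∈ nthRootsFinset k (1 : ℂ),
      (1 - PowerSeries.C (ρ * ζ) * PowerSeries.exp ℂ)⁻¹) * P = PowerSeries.C (k : ℂ) := by
    rw [Finset.sum_mul, ← ps_sum k hk ζ hζ]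
    apply Finset.sum_congr rfl
    intro ρ hρ
    have hρk : ρ ^ k = 1 := (Polynomial.mem_nthRootsFinset (Nat.pos_of_ne_zero hk) 1).mp hρ
    have hne : (1 : ℂ) - ρ * ζ ≠ 0 := by
      rw [sub_ne_zero]
      intro h
      apply hz
      calc ζ ^ k = ρ ^ k * ζ ^ k := by rw [hρk, one_mul]
        _ = (ρ * ζ) ^ k := (mul_pow _ _ _).symm
        _ = 1 := by rw [← h, one_pow]
    have hcc : PowerSeries.constantCoeff
        (1 - PowerSeries.C (ρ * ζ) * PowerSeries.exp ℂ) ≠ 0 := by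
      rw [const_coeff_f]; exact hne
    rw [hPdef, ← ps_prod k hk ζ hζ, ← Finset.mul_prod_erase _ _ hρ, ← mul_assoc,
      PowerSeries.inv_mul_cancel _ hcc, one_mul]
  rw [← hmul, mul_assoc, PowerSeries.mul_inv_cancel P hP, mul_one]

lemma ps_T (c : ℕ) (hc0 : c ≠ 0) :
    (PowerSeries.X : PowerSeries ℂ) * ∑ η ∈ (nthRootsFinset c (1 : ℂ)).erase 1,
        (1 - PowerSeries.C η * PowerSeries.exp ℂ)⁻¹
      = bernoulliPowerSeries ℂ - PowerSeries.rescale (c : ℂ) (bernoulliPowerSeries ℂ) := by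
  have hcC : (c : ℂ) ≠ 0 := Nat.cast_ne_zero.mpr hc0
  have hD : (1 - (PowerSeries.exp ℂ) ^ c : PowerSeries ℂ) ≠ 0 := by
    intro h
    have h1 := congrArg (PowerSeries.coeff 1) h
    rw [PowerSeries.exp_pow_eq_rescale_exp] at h1
    simp [PowerSeries.coeff_rescale, PowerSeries.coeff_exp, PowerSeries.coeff_one] at h1
    exact hc0 h1
  apply mul_right_cancel₀ hD
  have hfull : (1 - (PowerSeries.exp ℂ) ^ c : PowerSeries ℂ)
      = ∏ η ∈ nthRootsFinset c (1 : ℂ), (1 - PowerSeries.C η * PowerSeries.exp ℂ) := by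
    have h := ps_prod c hc0 1 one_ne_zero
    simpa using h.symm
  have hTD : (∑ η ∈ (nthRootsFinset c (1 : ℂ)).erase 1,
        (1 - PowerSeries.C η * PowerSeries.exp ℂ)⁻¹) * (1 - (PowerSeries.exp ℂ) ^ c)
      = PowerSeries.C (c : ℂ) - ∑ j ∈ range c, (PowerSeries.exp ℂ) ^ j := by
    rw [Finset.sum_mul]
    have step : ∀ η ∈ (nthRootsFinset c (1 : ℂ)).erase 1,
        (1 - PowerSeries.C η * PowerSeries.exp ℂ)⁻¹ * (1 - (PowerSeries.exp ℂ) ^ c)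
          = ∏ η' ∈ (nthRootsFinset c (1 : ℂ)).erase η,
              (1 - PowerSeries.C η' * PowerSeries.exp ℂ) := by
      intro η hη
      have hη1 : η ≠ 1 := Finset.ne_of_mem_erase hη
      have hmem := Finset.mem_of_mem_erase hη
      have hcc : PowerSeries.constantCoeff
          (1 - PowerSeries.C η * PowerSeries.exp ℂ) ≠ 0 := by
        rw [const_coeff_f]; exact sub_ne_zero.mpr (Ne.symm hη1)
      rw [hfull, ← Finset.mul_prod_erase _ _ hmem, ← mul_assoc,
        PowerSeries.inv_mul_cancel _ hcc, one_mul]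
    rw [Finset.sum_congr rfl step]
    have hsum := ps_sum c hc0 1 one_ne_zero
    simp only [mul_one] at hsum
    rw [← Finset.add_sum_erase _ _ (Polynomial.one_mem_nthRootsFinset
      (Nat.pos_of_ne_zero hc0))] at hsum
    have hgeom := ps_geom c hc0
    linear_combination hsum - hgeom
  have hB1 : bernoulliPowerSeries ℂ * (1 - (PowerSeries.exp ℂ) ^ c)
      = -(PowerSeries.X * ∑ j ∈ range c, (PowerSeries.exp ℂ) ^ j) := by
    have h1 := geom_sum_mul (PowerSeries.exp ℂ) c
    have h2 := bernoulliPowerSeries_mul_exp_sub_one ℂ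
    linear_combination (bernoulliPowerSeries ℂ) * h1
      - (∑ j ∈ range c, (PowerSeries.exp ℂ) ^ j) * h2
  have hB2 : PowerSeries.rescale (c : ℂ) (bernoulliPowerSeries ℂ) * (1 - (PowerSeries.exp ℂ) ^ c)
      = -(PowerSeries.C (c : ℂ) * PowerSeries.X) := by
    rw [PowerSeries.exp_pow_eq_rescale_exp]
    have key : (1 - PowerSeries.rescale (c : ℂ) (PowerSeries.exp ℂ) : PowerSeries ℂ)
        = PowerSeries.rescale (c : ℂ) (1 - PowerSeries.exp ℂ) := by
      rw [map_sub, map_one]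
    rw [key, ← map_mul]
    have key2 : bernoulliPowerSeries ℂ * (1 - PowerSeries.exp ℂ) = -PowerSeries.X := by
      linear_combination -(bernoulliPowerSeries_mul_exp_sub_one ℂ)
    rw [key2, map_neg, PowerSeries.rescale_X]
  rw [mul_assoc, hTD, sub_mul, hB1, hB2]
  ring

lemma eq_one_of (c p : ℕ) (hcp : Nat.Coprime c p) (x : ℂ) (h1 : x ^ c = 1) (h2 : x ^ p = 1) :
    x = 1 := by
  have hdvd : orderOf x ∣ Nat.gcd c p :=
    Nat.dvd_gcd (orderOf_dvd_of_pow_eq_one h1) (orderOf_dvd_of_pow_eq_one h2)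
  rw [hcp] at hdvd
  exact orderOf_eq_one_iff.mp (Nat.dvd_one.mp hdvd)


end TwistedAux

/-- For a prime `p` and `c ≥ 2` coprime to `p`:
`Σ_{ρ ∈ μ_p} Σ_{ξ ∈ μ_c, ξ ≠ 1} ℬ_n(ρ·ξ) = p^{n+1}·(1 − c^{n+1})·B_{n+1}/(n+1)`. -/
theorem sum_sum_twistedBernoulli (p : ℕ) (hp : p.Prime) (c : ℕ) (hc : 2 ≤ c)
    (hcp : Nat.Coprime c p) (n : ℕ) :
    ∑ ρ ∈ Polynomial.nthRootsFinset p (1 : ℂ),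
        ∑ ξ ∈ (Polynomial.nthRootsFinset c (1 : ℂ)).erase 1, twistedBernoulli (ρ * ξ) n
      = (p : ℂ) ^ (n + 1) * (1 - (c : ℂ) ^ (n + 1)) * (bernoulli (n + 1) : ℂ) /
          ((n : ℂ) + 1) := by
  classical
  have hp0 : p ≠ 0 := hp.pos.ne'
  have hc0 : c ≠ 0 := by omega
  -- basic facts about ξ in the erased finset
  have hfacts : ∀ ξ ∈ (nthRootsFinset c (1 : ℂ)).erase 1, ξ ^ c = 1 ∧ ξ ≠ 0 ∧ ξ ^ p ≠ 1 := by
    intro ξ hξ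
    have hξ1 : ξ ≠ 1 := Finset.ne_of_mem_erase hξ
    have hξc : ξ ^ c = 1 :=
      (Polynomial.mem_nthRootsFinset (Nat.pos_of_ne_zero hc0) 1).mp (Finset.mem_of_mem_erase hξ)
    refine ⟨hξc, ?_, ?_⟩
    · intro h
      rw [h, zero_pow hc0] at hξc
      exact zero_ne_one hξc
    · intro h
      exact hξ1 (TwistedAux.eq_one_of c p hcp ξ hξc h)
  -- swap the two sums
  rw [Finset.sum_comm]
  -- inner sum over ρ
  have inner : ∀ ξ ∈ (nthRootsFinset c (1 : ℂ)).erase 1,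
      ∑ ρ ∈ nthRootsFinset p (1 : ℂ), twistedBernoulli (ρ * ξ) n
        = (p : ℂ) ^ (n + 1) * twistedBernoulli (ξ ^ p) n := by
    intro ξ hξ
    obtain ⟨hξc, hξ0, hξp⟩ := hfacts ξ hξ
    have key := TwistedAux.ps_sum_inv p hp0 ξ hξ0 hξp
    rw [TwistedAux.ps_inv_rescale p (ξ ^ p) hξp] at key
    have := congrArg (PowerSeries.coeff n) key
    rw [map_sum] at this
    simp only [PowerSeries.coeff_C_mul, PowerSeries.coeff_rescale] at this
    unfold twistedBernoulli
    rw [← Finset.mul_sum, this]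
    ring
  rw [Finset.sum_congr rfl inner, ← Finset.mul_sum]
  -- reindex ξ ↦ ξ^p
  have himg : Finset.image (fun ξ : ℂ => ξ ^ p) ((nthRootsFinset c (1 : ℂ)).erase 1)
      = (nthRootsFinset c (1 : ℂ)).erase 1 := by
    have hinj : Set.InjOn (fun ξ : ℂ => ξ ^ p) ((nthRootsFinset c (1 : ℂ)).erase 1 : Finset ℂ) := by
      intro x hx y hy hxy
      obtain ⟨hxc, hx0, -⟩ := hfacts x (Finset.mem_coe.mp hx)
      obtain ⟨hyc, hy0, -⟩ := hfacts y (Finset.mem_coe.mp hy)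
      have h1 : (x / y) ^ c = 1 := by rw [div_pow, hxc, hyc, div_one]
      have h2 : (x / y) ^ p = 1 := by
        simp only at hxy
        rw [div_pow, hxy, div_self (pow_ne_zero p hy0)]
      have := TwistedAux.eq_one_of c p hcp (x / y) h1 h2
      field_simp at this
      exact this
    apply Finset.eq_of_subset_of_card_le
    · intro η hη
      simp only [Finset.mem_image] at hη
      obtain ⟨ξ, hξ, rfl⟩ := hη
      obtain ⟨hξc, hξ0, hξp⟩ := hfacts ξ hξ
      rw [Finset.mem_erase]
      refine ⟨hξp, ?_⟩
      rw [Polynomial.mem_nthRootsFinset (Nat.pos_of_ne_zero hc0) 1, ← pow_mul, mul_comm,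
        pow_mul, hξc, one_pow]
    · rw [Finset.card_image_of_injOn hinj]
  have hreindex : ∑ ξ ∈ (nthRootsFinset c (1 : ℂ)).erase 1, twistedBernoulli (ξ ^ p) n
      = ∑ η ∈ (nthRootsFinset c (1 : ℂ)).erase 1, twistedBernoulli η n := by
    conv_rhs => rw [← himg]
    rw [Finset.sum_image (fun x hx y hy h => by
      have hinj : Set.InjOn (fun ξ : ℂ => ξ ^ p) ((nthRootsFinset c (1 : ℂ)).erase 1 : Finset ℂ) := by
        intro a ha b hb hab
        obtain ⟨hac, ha0, -⟩ := hfacts a (Finset.mem_coe.mp ha)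
        obtain ⟨hbc, hb0, -⟩ := hfacts b (Finset.mem_coe.mp hb)
        have h1 : (a / b) ^ c = 1 := by rw [div_pow, hac, hbc, div_one]
        have h2 : (a / b) ^ p = 1 := by
          simp only at hab
          rw [div_pow, hab, div_self (pow_ne_zero p hb0)]
        have := TwistedAux.eq_one_of c p hcp (a / b) h1 h2
        field_simp at this
        exact this
      exact hinj hx hy h)]
  rw [hreindex]
  -- compute the remaining sum via TwistedAux.ps_T
  have hT := TwistedAux.ps_T c hc0
  have hcoeff := congrArg (PowerSeries.coeff (n + 1)) hT
  rw [PowerSeries.coeff_succ_X_mul, map_sum, map_sub] at hcoeff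
  have hBcoeff : ∀ m : ℕ, PowerSeries.coeff m (bernoulliPowerSeries ℂ)
      = (bernoulli m : ℂ) / (Nat.factorial m : ℂ) := by
    intro m
    rw [bernoulliPowerSeries, PowerSeries.coeff_mk, eq_ratCast]
    push_cast
    ring
  rw [PowerSeries.coeff_rescale, hBcoeff] at hcoeff
  have hsumval : ∑ η ∈ (nthRootsFinset c (1 : ℂ)).erase 1, twistedBernoulli η n
      = (Nat.factorial n : ℂ) * ((1 - (c : ℂ) ^ (n + 1)) *
          ((bernoulli (n + 1) : ℂ) / (Nat.factorial (n + 1) : ℂ))) := by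
    unfold twistedBernoulli
    rw [← Finset.mul_sum, hcoeff]
    ring
  rw [hsumval]
  have hfac : (Nat.factorial (n + 1) : ℂ) = ((n : ℂ) + 1) * (Nat.factorial n : ℂ) := by
    rw [Nat.factorial_succ]
    push_cast
    ring
  have hn1 : ((n : ℂ) + 1) ≠ 0 := by
    have := Nat.cast_add_one_ne_zero (R := ℂ) n
    simpa using this
  have hnf : (Nat.factorial n : ℂ) ≠ 0 := Nat.cast_ne_zero.mpr n.factorial_ne_zero
  rw [hfac]
  field_simp
end
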